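/- Let $(A, \prec_{\alpha,\beta}, \succ_{\alpha,\beta}, p_\alpha, q_\alpha)_{\alpha,\beta\in\Omega}$ be a BiHom-$\Omega$-dendriform algebra. Define $x\bullet_{\alpha,\beta}y := x\prec_{\alpha,\beta}y + x\succ_{\alpha,\beta}y$. Then $(A, \bullet_{\alpha,\beta}, p_\alpha, q_\alpha)_{\alpha,\beta\in\Omega}$ is a BiHom-$\Omega$-associative algebra. -/
import Mathlib

/-- A BiHom-Ω-dendriform algebra gives a BiHom-Ω-associative algebra via x•y = x≺y + x≻y. -/
theorem stmt_4
    {K : Type*} [Field K] {Ω : Type*} [Semigroup Ω]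
    {A : Type*} [AddCommGroup A] [Module K A]
    (prec succ : Ω → Ω → A →ₗ[K] A →ₗ[K] A)
    (p q : Ω → A →ₗ[K] A)
    -- the families commute
    (hpq : ∀ (α : Ω) (x : A), p α (q α x) = q α (p α x))
    -- multiplicativity
    (hpprec : ∀ (α β : Ω) (x y : A), p (α * β) (prec α β x y) = prec α β (p α x) (p β y))
    (hpsucc : ∀ (α β : Ω) (x y : A), p (α * β) (succ α β x y) = succ α β (p α x) (p β y))
    (hqprec : ∀ (α β : Ω) (x y : A), q (α * β) (prec α β x y) = prec α β (q α x) (q β y))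
    (hqsucc : ∀ (α β : Ω) (x y : A), q (α * β) (succ α β x y) = succ α β (q α x) (q β y))
    -- BiHom-Ω-dendriform axioms
    (hden1 : ∀ (α β γ : Ω) (x y z : A),
      prec (α * β) γ (prec α β x y) (q γ z)
        = prec α (β * γ) (p α x) (prec β γ y z + succ β γ y z))
    (hden2 : ∀ (α β γ : Ω) (x y z : A),
      prec (α * β) γ (succ α β x y) (q γ z) = succ α (β * γ) (p α x) (prec β γ y z))
    (hden3 : ∀ (α β γ : Ω) (x y z : A),
      succ α (β * γ) (p α x) (succ β γ y z)
        = succ (α * β) γ (prec α β x y + succ α β x y) (q γ z))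
    -- the sum operation
    (bull : Ω → Ω → A → A → A)
    (hbull : ∀ (α β : Ω) (x y : A), bull α β x y = prec α β x y + succ α β x y) :
    -- (A, bull, p, q) is a BiHom-Ω-associative algebra
    (∀ (α β : Ω) (x y : A), p (α * β) (bull α β x y) = bull α β (p α x) (p β y)) ∧
    (∀ (α β : Ω) (x y : A), q (α * β) (bull α β x y) = bull α β (q α x) (q β y)) ∧
    (∀ (α β γ : Ω) (x y z : A),
      bull α (β * γ) (p α x) (bull β γ y z) = bull (α * β) γ (bull α β x y) (q γ z)) := by
  refine ⟨?_, ?_, ?_⟩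
  · intro α β x y
    simp [hbull, map_add, hpprec, hpsucc]
  · intro α β x y
    simp [hbull, map_add, hqprec, hqsucc]
  · intro α β γ x y z
    simp only [hbull, map_add, LinearMap.add_apply]
    rw [hden1, hden2, hden3]
    simp only [map_add, LinearMap.add_apply]
    abel
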